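/- Let G be a finite connected graph with edge set L, let Ω ⊆ {0,1}^L be the set of incidence vectors of spanning trees of G, and let P = { (α, β) ∈ [0,1]^L × conv(Ω) : α ≤ β componentwise }. Then every vertex (extreme point) of the polytope P has α equal to a 0-1 incidence vector of a spanning forest of G. -/

import Mathlib

open scoped Classical

/-- Incidence vector of a graph's edge set, as a function on the edges of G. -/
noncomputable def incVec {V : Type*} (G H : SimpleGraph V) : G.edgeSet → ℝ :=
  fun e => if (e : Sym2 V) ∈ H.edgeSet then 1 else 0

/-- Subgraphs of acyclic graphs are acyclic. -/
lemma isAcyclic_anti' {V : Type*} {F T : SimpleGraph V} (h : F ≤ T)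
    (hT : T.IsAcyclic) : F.IsAcyclic := by
  intro v c hc
  exact hT (c.mapLe h) (hc.mapLe h)

/-- Every extreme point of the polytope
P = {(α,β) : β ∈ conv(Ω), 0 ≤ α ≤ β componentwise} has α equal to a 0-1
incidence vector of a spanning forest of G. -/
theorem extreme_points_are_spanning_forests {V : Type*} [Fintype V]
    (G : SimpleGraph V) (hG : G.Connected) :
    ∀ p ∈ Set.extremePoints ℝ
      {p : (G.edgeSet → ℝ) × (G.edgeSet → ℝ) |
        p.2 ∈ convexHull ℝ {β | ∃ T : SimpleGraph V, T ≤ G ∧ T.IsTree ∧ β = incVec G T} ∧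
        ∀ e : G.edgeSet, 0 ≤ p.1 e ∧ p.1 e ≤ p.2 e},
      ∃ F : SimpleGraph V, F ≤ G ∧ F.IsAcyclic ∧ p.1 = incVec G F := by
  set Ω : Set (G.edgeSet → ℝ) :=
    {β | ∃ T : SimpleGraph V, T ≤ G ∧ T.IsTree ∧ β = incVec G T} with hΩ
  set P : Set ((G.edgeSet → ℝ) × (G.edgeSet → ℝ)) :=
    {p | p.2 ∈ convexHull ℝ Ω ∧ ∀ e : G.edgeSet, 0 ≤ p.1 e ∧ p.1 e ≤ p.2 e} with hP
  -- points of the hull are nonnegative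
  have hull_nonneg : ∀ γ ∈ convexHull ℝ Ω, ∀ e, (0:ℝ) ≤ γ e := by
    intro γ hγ e
    have : convexHull ℝ Ω ⊆ {γ : G.edgeSet → ℝ | ∀ e, 0 ≤ γ e} := by
      apply convexHull_min
      · rintro γ ⟨T, _, _, rfl⟩ e
        unfold incVec; split <;> norm_num
      · intro x hx y hy a b ha hb _
        intro e
        have := add_nonneg (mul_nonneg ha (hx e)) (mul_nonneg hb (hy e))
        simpa using this
    exact this hγ e
  rintro ⟨α, β⟩ hp
  obtain ⟨⟨hβ, hαβ⟩, hext⟩ := hp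
  -- Step 1: each coordinate of α is 0 or equals β
  have step1 : ∀ e, α e = 0 ∨ α e = β e := by
    intro e
    by_contra h
    push_neg at h
    obtain ⟨h0, hb⟩ := h
    have hα0 : 0 < α e := lt_of_le_of_ne (hαβ e).1 (Ne.symm h0)
    have hαb : α e < β e := lt_of_le_of_ne (hαβ e).2 hb
    set ε : ℝ := min (α e) (β e - α e) with hε
    have hεpos : 0 < ε := lt_min hα0 (by linarith)
    have hε1 : ε ≤ α e := min_le_left _ _
    have hε2 : ε ≤ β e - α e := min_le_right _ _
    set δ : G.edgeSet → ℝ := fun e' => if e' = e then ε else 0 with hδ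
    have hδe : δ e = ε := if_pos rfl
    have h1 : ((α + δ, β) : _ × _) ∈ P := by
      refine ⟨hβ, fun e' => ?_⟩
      by_cases he' : e' = e
      · subst he'
        simp only [Pi.add_apply, hδe]
        constructor <;> linarith
      · have : δ e' = 0 := if_neg he'
        simp only [Pi.add_apply, this, add_zero]
        exact hαβ e'
    have h2 : ((α - δ, β) : _ × _) ∈ P := by
      refine ⟨hβ, fun e' => ?_⟩
      by_cases he' : e' = e
      · subst he'
        simp only [Pi.sub_apply, hδe]
        have := (hαβ e').2
        constructor <;> linarith
      · have : δ e' = 0 := if_neg he'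
        simp only [Pi.sub_apply, this, sub_zero]
        exact hαβ e'
    have hseg : (α, β) ∈ openSegment ℝ ((α + δ, β) : _ × _) (α - δ, β) := by
      refine ⟨1/2, 1/2, by norm_num, by norm_num, by norm_num, ?_⟩
      have : (1/2 : ℝ) • ((α + δ, β) : _ × _) + (1/2 : ℝ) • ((α - δ, β) : _ × _)
          = ((1/2 : ℝ) • (α + δ) + (1/2 : ℝ) • (α - δ), (1/2 : ℝ) • β + (1/2 : ℝ) • β) := rfl
      rw [this]
      refine Prod.ext ?_ ?_
      · funext e'
        simp only [Pi.add_apply, Pi.smul_apply, Pi.sub_apply, smul_eq_mul]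
        ring
      · funext e'
        simp only [Pi.add_apply, Pi.smul_apply, smul_eq_mul]
        ring
    have heq : α + δ = α := congrArg Prod.fst (hext h1 h2 hseg)
    have : α e + δ e = α e := congrFun heq e
    rw [hδe] at this
    linarith
  -- Step 2: β is an extreme point of the hull, hence β ∈ Ω
  have step2 : β ∈ Ω := by
    apply extremePoints_convexHull_subset (𝕜 := ℝ)
    refine ⟨hβ, ?_⟩
    intro β₁ hβ₁ β₂ hβ₂ hseg
    obtain ⟨a, b, ha, hb, hab, habβ⟩ := hseg
    set α₁ : G.edgeSet → ℝ := fun e => if α e = 0 then 0 else β₁ e with hα₁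
    set α₂ : G.edgeSet → ℝ := fun e => if α e = 0 then 0 else β₂ e with hα₂
    have hm1 : (α₁, β₁) ∈ P := by
      refine ⟨hβ₁, fun e => ?_⟩
      simp only [hα₁]
      split
      · exact ⟨le_refl 0, hull_nonneg β₁ hβ₁ e⟩
      · exact ⟨hull_nonneg β₁ hβ₁ e, le_refl _⟩
    have hm2 : (α₂, β₂) ∈ P := by
      refine ⟨hβ₂, fun e => ?_⟩
      simp only [hα₂]
      split
      · exact ⟨le_refl 0, hull_nonneg β₂ hβ₂ e⟩
      · exact ⟨hull_nonneg β₂ hβ₂ e, le_refl _⟩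
    have hsum : a • α₁ + b • α₂ = α := by
      funext e
      simp only [Pi.add_apply, Pi.smul_apply, hα₁, hα₂, smul_eq_mul]
      by_cases h0 : α e = 0
      · rw [if_pos h0, if_pos h0, h0]; ring
      · rw [if_neg h0, if_neg h0]
        have hbe : α e = β e := (step1 e).resolve_left h0
        rw [hbe]
        have h := congrFun habβ e
        simp only [Pi.add_apply, Pi.smul_apply, smul_eq_mul] at h
        exact h
    have hseg' : ((α, β) : _ × _) ∈ openSegment ℝ ((α₁, β₁) : _ × _) (α₂, β₂) := by
      refine ⟨a, b, ha, hb, hab, ?_⟩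
      rw [Prod.smul_def, Prod.smul_def, Prod.mk_add_mk, hsum, habβ]
    have h := hext hm1 hm2 hseg'
    exact congrArg Prod.snd h
  obtain ⟨T, hTG, hTtree, hβT⟩ := step2
  -- Define the forest F
  set F : SimpleGraph V :=
    { Adj := fun u v => ∃ h : G.Adj u v, α ⟨s(u, v), h⟩ ≠ 0
      symm := by
        constructor; rintro u v ⟨h, hne⟩
        refine ⟨h.symm, ?_⟩
        convert hne using 2
        exact Subtype.ext (Sym2.eq_swap)
      loopless := ⟨by rintro u ⟨h, _⟩; exact G.irrefl h⟩ } with hF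
  have hFG : F ≤ G := by rintro u v ⟨h, _⟩; exact h
  have hFT : F ≤ T := by
    rintro u v ⟨h, hne⟩
    rcases step1 ⟨s(u, v), h⟩ with h0 | hbe
    · exact absurd h0 hne
    · rw [hbe, hβT] at hne
      unfold incVec at hne
      by_contra hadj
      rw [if_neg (by simpa using hadj)] at hne
      exact hne rfl
  refine ⟨F, hFG, isAcyclic_anti' hFT hTtree.IsAcyclic, funext fun e => ?_⟩
  obtain ⟨e, heG⟩ := e
  induction e using Sym2.ind with
  | _ u v =>
    have hGadj : G.Adj u v := heG
    simp only [incVec]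
    show α ⟨s(u, v), heG⟩ = _
    rcases step1 ⟨s(u, v), heG⟩ with h0 | hbe
    · rw [h0, if_neg]
      intro hmem
      have hadj : F.Adj u v := hmem
      obtain ⟨h, hne⟩ := hadj
      exact hne h0
    · rw [hbe, hβT]
      simp only [incVec]
      by_cases hT : s(u, v) ∈ T.edgeSet
      · rw [if_pos hT, if_pos]
        show F.Adj u v
        refine ⟨hGadj, ?_⟩
        have h := hbe
        rw [hβT] at h
        unfold incVec at h
        rw [if_pos hT] at h
        rw [h]
        norm_num
      · rw [if_neg hT, if_neg]
        intro hmem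
        have hadj : F.Adj u v := hmem
        exact hT ((T.mem_edgeSet).mpr (hFT hadj))
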